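/- Let k ≥ 2 be an integer. If there exists a permutation σ of ZMod (k+1) such that the maps i ↦ i + σ(i) and i ↦ i - σ(i) on ZMod (k+1) are both bijective, then a_k(n)/n converges to k/4 as n → ∞. -/

import Mathlib

open Finset Filter

/-- The four directions: horizontal, vertical and the two diagonals. -/
def Dirs : Finset (ℤ × ℤ) := {(1, 0), (0, 1), (1, 1), (1, -1)}

/-- `p` is the start of a pattern of length `k` of `S` in direction `d`:
`p + t • d ∈ S` for all `0 ≤ t < k`, while `p - d ∉ S` and `p + k • d ∉ S`. -/
def IsPatternStart (S : Finset (ℤ × ℤ)) (k : ℕ) (d p : ℤ × ℤ) : Prop :=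
  (∀ t : ℕ, t < k → p + (t : ℤ) • d ∈ S) ∧ p - d ∉ S ∧ p + (k : ℤ) • d ∉ S

/-- `P_k(S)`: the number of pairs `(d, p)` with `d ∈ Dirs` and `p` the start of a
pattern of length `k` of `S` in direction `d`. -/
noncomputable def patternCount (S : Finset (ℤ × ℤ)) (k : ℕ) : ℕ :=
  Set.ncard {dp : (ℤ × ℤ) × (ℤ × ℤ) | dp.1 ∈ Dirs ∧ IsPatternStart S k dp.1 dp.2}

/-- `a_k(n)`: the minimum cardinality of a finite `S ⊆ ℤ × ℤ` with exactly `n`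
patterns of length `k`. -/
noncomputable def minPoints (k n : ℕ) : ℕ :=
  sInf {c | ∃ S : Finset (ℤ × ℤ), patternCount S k = n ∧ S.card = c}

lemma dirs_cases {d : ℤ × ℤ} (hd : d ∈ Dirs) :
    d = (1,0) ∨ d = (0,1) ∨ d = (1,1) ∨ d = (1,-1) := by
  simpa [Dirs] using hd

lemma smul_inj {d : ℤ × ℤ} (hd : d ∈ Dirs) :
    Function.Injective (fun t : ℤ => t • d) := by
  rcases dirs_cases hd with h | h | h | h <;> subst h <;>
    intro a b hab <;> simp [Prod.ext_iff] at hab <;> omega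

lemma add_smul_inj {d : ℤ × ℤ} (hd : d ∈ Dirs) (q : ℤ × ℤ) :
    Function.Injective (fun t : ℤ => q + t • d) := by
  intro a b hab
  exact smul_inj hd (by simpa using hab)


lemma addsub (p d : ℤ × ℤ) (a b : ℤ) : p + a • d - b • d = p + (a - b) • d := by
  rw [sub_smul]; abel

lemma addadd (p d : ℤ × ℤ) (a b : ℤ) : p + a • d + b • d = p + (a + b) • d := by
  rw [add_smul]; abel

lemma subsub (p d : ℤ × ℤ) (a b : ℤ) : p - a • d - b • d = p - (a + b) • d := by
  rw [add_smul]; abel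

lemma subadd (p d : ℤ × ℤ) (a b : ℤ) : p - a • d + b • d = p + (b - a) • d := by
  rw [sub_smul]; abel

variable (S : Finset (ℤ × ℤ)) {d : ℤ × ℤ}

lemma exists_back (hd : d ∈ Dirs) (q : ℤ × ℤ) : ∃ a : ℕ, q - ((a:ℤ)+1) • d ∉ S := by
  by_contra h
  push_neg at h
  have hinj : Function.Injective (fun a : ℕ => (⟨q - ((a:ℤ)+1) • d, h a⟩ : {x // x ∈ S})) := by
    intro a b hab
    simp only [Subtype.mk_eq_mk, sub_eq_add_neg, ← neg_smul] at hab
    have := add_smul_inj hd q hab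
    omega
  have : Finite ℕ := Finite.of_injective _ hinj
  exact absurd this (by simp [Set.infinite_univ, not_finite_iff_infinite]; infer_instance)

lemma exists_forw (hd : d ∈ Dirs) (q : ℤ × ℤ) : ∃ a : ℕ, q + ((a:ℤ)+1) • d ∉ S := by
  by_contra h
  push_neg at h
  have hinj : Function.Injective (fun a : ℕ => (⟨q + ((a:ℤ)+1) • d, h a⟩ : {x // x ∈ S})) := by
    intro a b hab
    simp only [Subtype.mk_eq_mk] at hab
    have := add_smul_inj hd q hab
    omega
  have : Finite ℕ := Finite.of_injective _ hinj
  exact absurd this (by simp [not_finite_iff_infinite]; infer_instance)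

noncomputable def back (hd : d ∈ Dirs) (q : ℤ × ℤ) : ℕ := Nat.find (exists_back S hd q)
noncomputable def forw (hd : d ∈ Dirs) (q : ℤ × ℤ) : ℕ := Nat.find (exists_forw S hd q)
noncomputable def rstart (hd : d ∈ Dirs) (q : ℤ × ℤ) : ℤ × ℤ := q - (back S hd q : ℤ) • d
noncomputable def rlen (hd : d ∈ Dirs) (q : ℤ × ℤ) : ℕ := back S hd q + forw S hd q + 1

lemma back_notmem (hd : d ∈ Dirs) (q : ℤ × ℤ) : q - ((back S hd q : ℤ)+1) • d ∉ S :=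
  Nat.find_spec (exists_back S hd q)

lemma forw_notmem (hd : d ∈ Dirs) (q : ℤ × ℤ) : q + ((forw S hd q : ℤ)+1) • d ∉ S :=
  Nat.find_spec (exists_forw S hd q)

lemma back_mem (hd : d ∈ Dirs) {q : ℤ × ℤ} (hq : q ∈ S) {i : ℕ} (hi : i ≤ back S hd q) :
    q - (i:ℤ) • d ∈ S := by
  cases i with
  | zero => simpa using hq
  | succ j =>
    unfold back at hi
    have := Nat.find_min (exists_back S hd q) (m := j) (by omega)
    push_neg at this
    have he : ((j+1:ℕ):ℤ) = (j:ℤ)+1 := by push_cast; ring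
    rw [he]; exact this

lemma forw_mem (hd : d ∈ Dirs) {q : ℤ × ℤ} (hq : q ∈ S) {i : ℕ} (hi : i ≤ forw S hd q) :
    q + (i:ℤ) • d ∈ S := by
  cases i with
  | zero => simpa using hq
  | succ j =>
    unfold forw at hi
    have := Nat.find_min (exists_forw S hd q) (m := j) (by omega)
    push_neg at this
    have he : ((j+1:ℕ):ℤ) = (j:ℤ)+1 := by push_cast; ring
    rw [he]; exact this

lemma isPatternStart_rstart (hd : d ∈ Dirs) {q : ℤ × ℤ} (hq : q ∈ S) :
    IsPatternStart S (rlen S hd q) d (rstart S hd q) := by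
  refine ⟨?_, ?_, ?_⟩
  · intro t ht
    rw [rstart, subadd]
    rcases le_or_gt t (back S hd q) with h | h
    · have he : (t:ℤ) - (back S hd q : ℤ) = -(((back S hd q - t : ℕ) : ℤ)) := by push_cast; omega
      rw [he, neg_smul, ← sub_eq_add_neg]
      exact back_mem S hd hq (by omega)
    · have he : (t:ℤ) - (back S hd q : ℤ) = ((t - back S hd q : ℕ) : ℤ) := by push_cast; omega
      rw [he]
      exact forw_mem S hd hq (by unfold rlen at ht; omega)
  · have he : rstart S hd q - d = q - ((back S hd q : ℤ)+1) • d := by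
      rw [rstart, add_smul, one_smul, sub_sub]
    rw [he]; exact back_notmem S hd q
  · have he : rstart S hd q + ((rlen S hd q : ℕ) : ℤ) • d = q + ((forw S hd q : ℤ)+1) • d := by
      rw [rstart, subadd, rlen]
      have he2 : ((back S hd q + forw S hd q + 1 : ℕ) : ℤ) - (back S hd q : ℤ)
          = (forw S hd q : ℤ) + 1 := by push_cast; ring
      rw [he2]
    rw [he]; exact forw_notmem S hd q

lemma back_of_start (hd : d ∈ Dirs) {k : ℕ} {p : ℤ × ℤ} (hp : IsPatternStart S k d p)
    {i : ℕ} (hi : i < k) : back S hd (p + (i:ℤ) • d) = i := by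
  rw [back, Nat.find_eq_iff]
  constructor
  · have he : p + (i:ℤ) • d - ((i:ℤ)+1) • d = p - d := by
      rw [addsub]
      have : (i:ℤ) - ((i:ℤ)+1) = -1 := by ring
      rw [this, neg_smul, one_smul, ← sub_eq_add_neg]
    rw [he]; exact hp.2.1
  · intro j hj hnot
    apply hnot
    have he : p + (i:ℤ) • d - ((j:ℤ)+1) • d = p + ((i - j - 1 : ℕ) : ℤ) • d := by
      rw [addsub]
      have h2 : (i:ℤ) - ((j:ℤ)+1) = ((i - j - 1 : ℕ):ℤ) := by omega
      rw [h2]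
    rw [he]
    exact hp.1 _ (by omega)

lemma forw_of_start (hd : d ∈ Dirs) {k : ℕ} {p : ℤ × ℤ} (hp : IsPatternStart S k d p)
    {i : ℕ} (hi : i < k) : forw S hd (p + (i:ℤ) • d) = k - 1 - i := by
  rw [forw, Nat.find_eq_iff]
  constructor
  · have he : p + (i:ℤ) • d + (((k - 1 - i : ℕ):ℤ)+1) • d = p + (k:ℤ) • d := by
      rw [addadd]
      have h2 : (i:ℤ) + (((k - 1 - i : ℕ):ℤ)+1) = (k:ℤ) := by omega
      rw [h2]
    rw [he]; exact hp.2.2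
  · intro j hj hnot
    apply hnot
    have he : p + (i:ℤ) • d + ((j:ℤ)+1) • d = p + ((i + j + 1 : ℕ) : ℤ) • d := by
      rw [addadd]
      have h2 : (i:ℤ) + ((j:ℤ)+1) = ((i + j + 1 : ℕ):ℤ) := by omega
      rw [h2]
    rw [he]
    exact hp.1 _ (by omega)

instance (S : Finset (ℤ × ℤ)) (k : ℕ) (d : ℤ × ℤ) : DecidablePred (IsPatternStart S k d) :=
  fun _ => by unfold IsPatternStart; infer_instance

def startsF (S : Finset (ℤ × ℤ)) (k : ℕ) (d : ℤ × ℤ) : Finset (ℤ × ℤ) :=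
  S.filter (fun p => IsPatternStart S k d p)

lemma start_mem_self {S : Finset (ℤ × ℤ)} {k : ℕ} {d p : ℤ × ℤ}
    (h : IsPatternStart S k d p) (hk : 1 ≤ k) : p ∈ S := by
  simpa using h.1 0 hk

lemma mem_startsF {S : Finset (ℤ × ℤ)} {k : ℕ} (hk : 1 ≤ k) {d p : ℤ × ℤ} :
    p ∈ startsF S k d ↔ IsPatternStart S k d p := by
  constructor
  · intro h; exact (Finset.mem_filter.mp h).2
  · intro h; exact Finset.mem_filter.mpr ⟨start_mem_self h hk, h⟩

lemma patternCount_eq (S : Finset (ℤ × ℤ)) {k : ℕ} (hk : 1 ≤ k) :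
    patternCount S k = ∑ d ∈ Dirs, (startsF S k d).card := by
  have hset : {dp : (ℤ × ℤ) × (ℤ × ℤ) | dp.1 ∈ Dirs ∧ IsPatternStart S k dp.1 dp.2}
      = ↑(Dirs.biUnion fun d => ({d} : Finset (ℤ × ℤ)) ×ˢ startsF S k d) := by
    ext ⟨d, p⟩
    simp only [Set.mem_setOf_eq, Finset.coe_biUnion, Set.mem_iUnion, Finset.mem_coe,
      Finset.mem_product, Finset.mem_singleton]
    constructor
    · rintro ⟨hd, hp⟩
      exact ⟨d, hd, rfl, (mem_startsF hk).mpr hp⟩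
    · rintro ⟨d', hd', rfl, hp⟩
      exact ⟨hd', (mem_startsF hk).mp hp⟩
  rw [patternCount, hset, Set.ncard_coe_finset]
  rw [Finset.card_biUnion]
  · apply Finset.sum_congr rfl
    intro d _
    simp
  · intro d _ d' _ hne
    apply Finset.disjoint_left.mpr
    rintro ⟨a, b⟩ h1 h2
    simp only [Finset.mem_product, Finset.mem_singleton] at h1 h2
    exact hne (h1.1 ▸ h2.1 ▸ rfl)

lemma card_starts_mul (S : Finset (ℤ × ℤ)) {k : ℕ} (hk : 1 ≤ k) {d : ℤ × ℤ} (hd : d ∈ Dirs) :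
    (startsF S k d).card * k = (S.filter (fun q => rlen S hd q = k)).card := by
  have key : ((startsF S k d) ×ˢ Finset.range k).card
      = (S.filter (fun q => rlen S hd q = k)).card := by
    apply Finset.card_bij (fun (pair : (ℤ × ℤ) × ℕ) _ => pair.1 + (pair.2 : ℤ) • d)
    · rintro ⟨p, i⟩ hpi
      simp only [Finset.mem_product, Finset.mem_range] at hpi
      obtain ⟨hp, hi⟩ := hpi
      have hps := (mem_startsF hk).mp hp
      refine Finset.mem_filter.mpr ⟨hps.1 i hi, ?_⟩
      rw [rlen, back_of_start S hd hps hi, forw_of_start S hd hps hi]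
      omega
    · rintro ⟨p, i⟩ hpi ⟨p', i'⟩ hpi' heq
      simp only [Finset.mem_product, Finset.mem_range] at hpi hpi'
      have hps := (mem_startsF hk).mp hpi.1
      have hps' := (mem_startsF hk).mp hpi'.1
      have hb : back S hd (p + (i:ℤ) • d) = i := back_of_start S hd hps hpi.2
      have hb' : back S hd (p' + (i':ℤ) • d) = i' := back_of_start S hd hps' hpi'.2
      simp only at heq
      have hii : i = i' := by rw [← hb, ← hb', heq]
      subst hii
      have hpp : p = p' := add_right_cancel heq
      simp [hpp]
    · intro q hq
      obtain ⟨hqS, hql⟩ := Finset.mem_filter.mp hq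
      have hstart := isPatternStart_rstart S hd hqS
      rw [hql] at hstart
      have hbk : back S hd q < k := by
        have : rlen S hd q = k := hql
        rw [rlen] at this; omega
      refine ⟨⟨rstart S hd q, back S hd q⟩, ?_, ?_⟩
      · simp only [Finset.mem_product, Finset.mem_range]
        exact ⟨(mem_startsF hk).mpr hstart, hbk⟩
      · simp only [rstart, subadd, sub_self, zero_smul, add_zero]
  rwa [Finset.card_product, Finset.card_range] at key

lemma starts_mul_le (S : Finset (ℤ × ℤ)) {k : ℕ} (hk : 1 ≤ k) {d : ℤ × ℤ} (hd : d ∈ Dirs) :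
    (startsF S k d).card * k ≤ S.card := by
  rw [card_starts_mul S hk hd]
  exact Finset.card_filter_le _ _

lemma dirs_card : Dirs.card = 4 := by decide

lemma patternCount_mul_le (S : Finset (ℤ × ℤ)) {k : ℕ} (hk : 1 ≤ k) :
    patternCount S k * k ≤ 4 * S.card := by
  rw [patternCount_eq S hk, Finset.sum_mul]
  calc ∑ d ∈ Dirs, (startsF S k d).card * k ≤ ∑ d ∈ Dirs, S.card := by
        apply Finset.sum_le_sum
        intro d hd
        exact starts_mul_le S hk hd
    _ = 4 * S.card := by rw [Finset.sum_const, dirs_card]; ring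

lemma dirs_snd {d : ℤ × ℤ} (hd : d ∈ Dirs) : d.2 = 0 ∨ d.2 = 1 ∨ d.2 = -1 := by
  rcases dirs_cases hd with h | h | h | h <;> subst h <;> simp

lemma snd_add_smul (p d : ℤ × ℤ) (t : ℤ) : (p + t • d).2 = p.2 + t * d.2 := by
  simp [Prod.snd_add, smul_eq_mul]

lemma snd_sub (p d : ℤ × ℤ) : (p - d).2 = p.2 - d.2 := by
  simp

section Sep
variable {A B : Finset (ℤ × ℤ)} {k : ℕ} {a b : ℤ}

lemma sep_starts (hk : 1 ≤ k) (ha : ∀ p ∈ A, a ≤ p.2) (hb : ∀ p ∈ B, p.2 ≤ b)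
    (hgap : b + (k:ℤ) + 1 < a) {d : ℤ × ℤ} (hd : d ∈ Dirs) :
    startsF (A ∪ B) k d = startsF A k d ∪ startsF B k d := by
  have hd2 := dirs_snd hd
  ext p
  rw [mem_startsF hk, Finset.mem_union, mem_startsF hk, mem_startsF hk]
  constructor
  · rintro ⟨h1, h2, h3⟩
    have hp0 : p ∈ A ∪ B := by simpa using h1 0 hk
    rcases Finset.mem_union.mp hp0 with hpA | hpB
    · left
      have hall : ∀ t : ℕ, t < k → p + (t:ℤ) • d ∈ A := by
        intro t ht
        have hmem := h1 t ht
        rcases Finset.mem_union.mp hmem with h | h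
        · exact h
        · exfalso
          have hy := hb _ h
          rw [snd_add_smul] at hy
          have hpa := ha _ hpA
          rcases hd2 with h0 | h0 | h0 <;> rw [h0] at hy <;> push_cast at hy ⊢ <;> omega
      refine ⟨hall, fun hc => h2 (Finset.mem_union_left _ hc),
        fun hc => h3 (Finset.mem_union_left _ hc)⟩
    · right
      have hall : ∀ t : ℕ, t < k → p + (t:ℤ) • d ∈ B := by
        intro t ht
        have hmem := h1 t ht
        rcases Finset.mem_union.mp hmem with h | h
        · exfalso
          have hy := ha _ h
          rw [snd_add_smul] at hy
          have hpb := hb _ hpB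
          rcases hd2 with h0 | h0 | h0 <;> rw [h0] at hy <;> push_cast at hy ⊢ <;> omega
        · exact h
      refine ⟨hall, fun hc => h2 (Finset.mem_union_right _ hc),
        fun hc => h3 (Finset.mem_union_right _ hc)⟩
  · rintro (⟨h1, h2, h3⟩ | ⟨h1, h2, h3⟩)
    · have hpA : p ∈ A := by simpa using h1 0 hk
      have hpa := ha _ hpA
      refine ⟨fun t ht => Finset.mem_union_left _ (h1 t ht), ?_, ?_⟩
      · intro hc
        rcases Finset.mem_union.mp hc with h | h
        · exact h2 h
        · have hy := hb _ h
          rw [snd_sub] at hy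
          rcases hd2 with h0 | h0 | h0 <;> rw [h0] at hy <;> omega
      · intro hc
        rcases Finset.mem_union.mp hc with h | h
        · exact h3 h
        · have hy := hb _ h
          rw [snd_add_smul] at hy
          rcases hd2 with h0 | h0 | h0 <;> rw [h0] at hy <;> push_cast at hy <;> omega
    · have hpB : p ∈ B := by simpa using h1 0 hk
      have hpb := hb _ hpB
      refine ⟨fun t ht => Finset.mem_union_right _ (h1 t ht), ?_, ?_⟩
      · intro hc
        rcases Finset.mem_union.mp hc with h | h
        · have hy := ha _ h
          rw [snd_sub] at hy
          rcases hd2 with h0 | h0 | h0 <;> rw [h0] at hy <;> omega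
        · exact h2 h
      · intro hc
        rcases Finset.mem_union.mp hc with h | h
        · have hy := ha _ h
          rw [snd_add_smul] at hy
          rcases hd2 with h0 | h0 | h0 <;> rw [h0] at hy <;> push_cast at hy <;> omega
        · exact h3 h

lemma sep_disjoint (ha : ∀ p ∈ A, a ≤ p.2) (hb : ∀ p ∈ B, p.2 ≤ b) (hab : b < a) :
    Disjoint A B := by
  rw [Finset.disjoint_left]
  intro p hpA hpB
  have := ha p hpA
  have := hb p hpB
  omega

lemma sep_patternCount (hk : 1 ≤ k) (ha : ∀ p ∈ A, a ≤ p.2) (hb : ∀ p ∈ B, p.2 ≤ b)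
    (hgap : b + (k:ℤ) + 1 < a) :
    patternCount (A ∪ B) k = patternCount A k + patternCount B k := by
  rw [patternCount_eq _ hk, patternCount_eq _ hk, patternCount_eq _ hk,
    ← Finset.sum_add_distrib]
  apply Finset.sum_congr rfl
  intro d hd
  rw [sep_starts hk ha hb hgap hd]
  apply Finset.card_union_of_disjoint
  have hd2 := dirs_snd hd
  apply sep_disjoint (a := a) (b := b) _ _ (by omega)
  · intro p hp
    exact ha p (start_mem_self ((mem_startsF hk).mp hp) hk)
  · intro p hp
    exact hb p (start_mem_self ((mem_startsF hk).mp hp) hk)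

end Sep

lemma sum_dirs (f : ℤ × ℤ → ℕ) :
    ∑ d ∈ Dirs, f d = f (1,0) + f (0,1) + f (1,1) + f (1,-1) := by
  rw [Dirs]
  rw [Finset.sum_insert (by decide), Finset.sum_insert (by decide),
    Finset.sum_insert (by decide), Finset.sum_singleton]
  ring

noncomputable def Seg (k : ℕ) (y0 : ℤ) : Finset (ℤ × ℤ) := (Finset.Ico (0:ℤ) (k:ℤ)) ×ˢ ({y0} : Finset ℤ)

lemma mem_Seg {k : ℕ} {y0 : ℤ} {p : ℤ × ℤ} :
    p ∈ Seg k y0 ↔ (0 ≤ p.1 ∧ p.1 < k) ∧ p.2 = y0 := by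
  rw [Seg, Finset.mem_product, Finset.mem_Ico, Finset.mem_singleton]

lemma card_Seg (k : ℕ) (y0 : ℤ) : (Seg k y0).card = k := by
  simp [Seg]

lemma snd_Seg {k : ℕ} {y0 : ℤ} {p : ℤ × ℤ} (hp : p ∈ Seg k y0) : p.2 = y0 :=
  (mem_Seg.mp hp).2

lemma starts_Seg_horiz (k : ℕ) (hk : 2 ≤ k) (y0 : ℤ) :
    startsF (Seg k y0) k (1,0) = {((0:ℤ), y0)} := by
  ext p
  rw [mem_startsF (by omega : 1 ≤ k)]
  constructor
  · rintro ⟨h1, h2, _⟩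
    have hp0 : p ∈ Seg k y0 := by simpa using h1 0 (by omega)
    obtain ⟨⟨hx0, hxk⟩, hy⟩ := mem_Seg.mp hp0
    have hx : p.1 = 0 := by
      by_contra hx
      apply h2
      apply mem_Seg.mpr
      have e1 : (p - ((1:ℤ),(0:ℤ))).1 = p.1 - 1 := rfl
      have e2 : (p - ((1:ℤ),(0:ℤ))).2 = p.2 := by simp
      rw [e1, e2]
      exact ⟨⟨by omega, by omega⟩, hy⟩
    simp only [Finset.mem_singleton, Prod.ext_iff]
    exact ⟨hx, hy⟩
  · intro hp
    simp only [Finset.mem_singleton] at hp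
    subst hp
    refine ⟨?_, ?_, ?_⟩
    · intro t ht
      apply mem_Seg.mpr
      refine ⟨⟨?_, ?_⟩, ?_⟩ <;> simp [smul_eq_mul] <;> omega
    · intro hc
      obtain ⟨⟨h1, _⟩, _⟩ := mem_Seg.mp hc
      simp at h1
    · intro hc
      obtain ⟨⟨_, h2⟩, _⟩ := mem_Seg.mp hc
      simp [smul_eq_mul] at h2

lemma starts_Seg_other (k : ℕ) (hk : 2 ≤ k) (y0 : ℤ) {d : ℤ × ℤ} (hd : d ∈ Dirs)
    (hdv : d.2 ≠ 0) : startsF (Seg k y0) k d = ∅ := by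
  ext p
  rw [mem_startsF (by omega)]
  simp only [Finset.notMem_empty, iff_false]
  rintro ⟨h1, _, _⟩
  have hp0 : p ∈ Seg k y0 := by simpa using h1 0 (by omega)
  have hp1 : p + (1:ℤ) • d ∈ Seg k y0 := h1 1 (by omega)
  have hy0 := snd_Seg hp0
  have hy1 := snd_Seg hp1
  rw [snd_add_smul] at hy1
  omega

lemma patternCount_Seg (k : ℕ) (hk : 2 ≤ k) (y0 : ℤ) :
    patternCount (Seg k y0) k = 1 := by
  rw [patternCount_eq _ (by omega), sum_dirs]
  rw [starts_Seg_horiz k hk y0]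
  rw [starts_Seg_other k hk y0 (by decide) (by decide),
    starts_Seg_other k hk y0 (by decide) (by decide),
    starts_Seg_other k hk y0 (by decide) (by decide)]
  simp

noncomputable def Segs (k r : ℕ) : Finset (ℤ × ℤ) :=
  match r with
  | 0 => ∅
  | r + 1 => Segs k r ∪ Seg k (-((k:ℤ)+2) * (r+1))

lemma patternCount_Segs (k : ℕ) (hk : 2 ≤ k) (r : ℕ) :
    patternCount (Segs k r) k = r ∧ (Segs k r).card = r * k ∧
      ∀ p ∈ Segs k r, -((k:ℤ)+2) * r ≤ p.2 ∧ p.2 ≤ -((k:ℤ)+2) := by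
  induction r with
  | zero =>
    refine ⟨?_, by simp [Segs], by simp [Segs]⟩
    rw [patternCount_eq _ (by omega : 1 ≤ k)]
    simp [startsF, Segs]
    intro a b _; rfl
  | succ r ih =>
    obtain ⟨ihc, ihcard, ihy⟩ := ih
    have hb : ∀ p ∈ Seg k (-((k:ℤ)+2) * (r+1)), p.2 ≤ -((k:ℤ)+2) * (r+1) := by
      intro p hp; rw [snd_Seg hp]
    have ha : ∀ p ∈ Segs k r, -((k:ℤ)+2) * r ≤ p.2 := fun p hp => (ihy p hp).1
    have hgap : -((k:ℤ)+2) * (r+1) + (k:ℤ) + 1 < -((k:ℤ)+2) * r := by push_cast; ring_nf; omega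
    refine ⟨?_, ?_, ?_⟩
    · rw [Segs, sep_patternCount (by omega) ha hb hgap, ihc,
        patternCount_Seg k hk _]
    · rw [Segs, Finset.card_union_of_disjoint (sep_disjoint ha hb (by push_cast; ring_nf; omega)),
        ihcard, card_Seg]
      ring
    · intro p hp
      have hk0 : (0:ℤ) ≤ (k:ℤ) := by positivity
      have hr0 : (0:ℤ) ≤ (r:ℤ) := by positivity
      have hprod := mul_nonneg (show (0:ℤ) ≤ (k:ℤ)+2 by linarith) hr0
      rcases Finset.mem_union.mp hp with h | h
      · obtain ⟨hl, hr⟩ := ihy p h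
        constructor
        · push_cast
          nlinarith
        · linarith
      · have hy := snd_Seg h
        rw [hy]
        push_cast
        constructor
        · linarith
        · nlinarith

section Block
variable {k : ℕ} (hk : 2 ≤ k) (σ : Equiv.Perm (ZMod (k+1)))

def Rem (σ : Equiv.Perm (ZMod (k+1))) (p : ℤ × ℤ) : Prop :=
  σ ((p.1 : ZMod (k+1))) = ((p.2 : ZMod (k+1)))

instance : DecidablePred (Rem σ) := fun _ => by unfold Rem; infer_instance

noncomputable def Sq (k m : ℕ) : Finset (ℤ × ℤ) :=
  (Finset.Ico (0:ℤ) (((k+1)*m : ℕ) : ℤ)) ×ˢ (Finset.Ico (0:ℤ) (((k+1)*m : ℕ) : ℤ))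

noncomputable def Block (σ : Equiv.Perm (ZMod (k+1))) (m : ℕ) : Finset (ℤ × ℤ) :=
  (Sq k m).filter (fun p => ¬ Rem σ p)

lemma countRes (m : ℕ) (c : ZMod (k+1)) :
    ((Finset.Ico (0:ℤ) (((k+1)*m : ℕ) : ℤ)).filter
      (fun y : ℤ => ((y : ZMod (k+1)) = c))).card = m := by
  induction m with
  | zero => simp
  | succ m ih =>
    have hsplit : Finset.Ico (0:ℤ) (((k+1)*(m+1) : ℕ) : ℤ)
        = Finset.Ico (0:ℤ) (((k+1)*m : ℕ) : ℤ) ∪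
          Finset.Ico (((k+1)*m : ℕ) : ℤ) (((k+1)*(m+1) : ℕ) : ℤ) := by
      rw [Finset.Ico_union_Ico_eq_Ico] <;> push_cast <;> nlinarith [Nat.zero_le m]
    rw [hsplit, Finset.filter_union, Finset.card_union_of_disjoint]
    · rw [ih]
      have hone : (Finset.Ico (((k+1)*m : ℕ) : ℤ) (((k+1)*(m+1) : ℕ) : ℤ)).filter
          (fun y : ℤ => ((y : ZMod (k+1)) = c)) = {(((k+1)*m : ℕ) : ℤ) + (c.val : ℤ)} := by
        ext y
        simp only [Finset.mem_filter, Finset.mem_Ico, Finset.mem_singleton]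
        constructor
        · rintro ⟨⟨h1, h2⟩, h3⟩
          have hv : ((y - ((k+1)*m : ℕ) : ℤ) : ZMod (k+1)) = c := by
            push_cast
            simp [h3]
          have hE : (((k+1)*(m+1) : ℕ) : ℤ) = (((k+1)*m : ℕ) : ℤ) + ((k:ℤ)+1) := by
            push_cast; ring
          rw [hE] at h2
          have hlt : (y - ((k+1)*m : ℕ) : ℤ).toNat < k + 1 := by omega
          have h0 : (0:ℤ) ≤ y - ((k+1)*m : ℕ) := by omega
          have : (((y - ((k+1)*m : ℕ) : ℤ).toNat : ZMod (k+1))) = c := by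
            rw [← hv, ← Int.toNat_of_nonneg h0]; simp
          have hval : c.val = (y - ((k+1)*m : ℕ) : ℤ).toNat := by
            rw [← this, ZMod.val_natCast_of_lt hlt]
          omega
        · rintro rfl
          have hcv : (c.val : ℤ) < (k:ℤ) + 1 := by
            exact_mod_cast ZMod.val_lt c
          have hcv0 : (0:ℤ) ≤ (c.val : ℤ) := by positivity
          have hN0 : (0:ℤ) ≤ (((k+1)*m : ℕ) : ℤ) := by positivity
          have hE : (((k+1)*(m+1) : ℕ) : ℤ) = (((k+1)*m : ℕ) : ℤ) + ((k:ℤ)+1) := by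
            push_cast; ring
          refine ⟨⟨by omega, by rw [hE]; omega⟩, ?_⟩
          push_cast
          have hz : ((k : ZMod (k+1)) + 1) = 0 := by
            exact_mod_cast ZMod.natCast_self (k+1)
          rw [show ((k : ZMod (k+1)) + 1) * (m : ZMod (k+1)) + (c.val : ZMod (k+1))
              = (c.val : ZMod (k+1)) by rw [hz]; ring]
          exact ZMod.natCast_rightInverse c
      rw [hone, Finset.card_singleton]
    · apply Finset.disjoint_filter_filter
      exact Finset.Ico_disjoint_Ico_consecutive _ _ _

lemma toNat_N (k m : ℕ) : (((k:ℤ)+1)*(m:ℤ)).toNat = (k+1)*m := by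
  rw [show ((k:ℤ)+1)*(m:ℤ) = (((k+1)*m : ℕ) : ℤ) by push_cast; ring, Int.toNat_natCast]

lemma card_Sq (m : ℕ) : (Sq k m).card = ((k+1)*m) * ((k+1)*m) := by
  simp only [Sq, Finset.card_product, Int.card_Ico, sub_zero]
  push_cast
  rw [toNat_N]

lemma card_RemF (m : ℕ) : ((Sq k m).filter (Rem σ)).card = ((k+1)*m) * m := by
  have hsplit : (Sq k m).filter (Rem σ)
      = (Finset.Ico (0:ℤ) (((k+1)*m : ℕ) : ℤ)).biUnion
        (fun x => ({x} : Finset ℤ) ×ˢ ((Finset.Ico (0:ℤ) (((k+1)*m : ℕ) : ℤ)).filter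
          (fun y : ℤ => ((y : ZMod (k+1)) = σ (x : ZMod (k+1)))))) := by
    ext ⟨x, y⟩
    simp only [Sq, Finset.mem_filter, Finset.mem_product, Finset.mem_biUnion,
      Finset.mem_singleton, Rem]
    constructor
    · rintro ⟨⟨hx, hy⟩, hr⟩
      exact ⟨x, hx, rfl, hy, hr.symm⟩
    · rintro ⟨x', hx', rfl, hy, hr⟩
      exact ⟨⟨hx', hy⟩, hr.symm⟩
  rw [hsplit, Finset.card_biUnion]
  · have : ∀ x ∈ Finset.Ico (0:ℤ) (((k+1)*m : ℕ) : ℤ),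
        (({x} : Finset ℤ) ×ˢ ((Finset.Ico (0:ℤ) (((k+1)*m : ℕ) : ℤ)).filter
          (fun y : ℤ => ((y : ZMod (k+1)) = σ (x : ZMod (k+1)))))).card = m := by
      intro x _
      rw [Finset.card_product, Finset.card_singleton, one_mul, countRes]
    rw [Finset.sum_congr rfl this, Finset.sum_const, smul_eq_mul]
    congr 1
    simp only [Int.card_Ico, sub_zero]
    push_cast
    rw [toNat_N]
  · intro x _ x' _ hne
    apply Finset.disjoint_left.mpr
    rintro ⟨a, b⟩ h1 h2
    simp only [Finset.mem_product, Finset.mem_singleton] at h1 h2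
    exact hne (h1.1 ▸ h2.1 ▸ rfl)

lemma card_Block (m : ℕ) : (Block σ m).card = k*(k+1)*m^2 := by
  have h := Finset.card_filter_add_card_filter_not (s := Sq k m) (p := Rem σ)
  rw [card_RemF σ m, card_Sq] at h
  have h2 : ((k+1)*m) * ((k+1)*m) = k*(k+1)*m^2 + ((k+1)*m) * m := by ring
  rw [h2, add_comm (k*(k+1)*m^2) _] at h
  exact Nat.add_left_cancel h

end Block

section Block2
variable {k : ℕ} {σ : Equiv.Perm (ZMod (k+1))}

lemma fst_add_smul (p d : ℤ × ℤ) (t : ℤ) : (p + t • d).1 = p.1 + t * d.1 := by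
  simp [Prod.fst_add, smul_eq_mul]

lemma rem_class (hσ1 : Function.Bijective (fun i : ZMod (k+1) => i + σ i))
    (hσ2 : Function.Bijective (fun i : ZMod (k+1) => i - σ i))
    {d : ℤ × ℤ} (hd : d ∈ Dirs) (q : ℤ × ℤ) :
    ∃ c : ZMod (k+1), ∀ t : ℤ, Rem σ (q + t • d) ↔ (t : ZMod (k+1)) = c := by
  rcases dirs_cases hd with h | h | h | h <;> subst h
  · refine ⟨σ.symm (q.2 : ZMod (k+1)) - (q.1 : ZMod (k+1)), fun t => ?_⟩
    have e1 : (q + t • ((1:ℤ),(0:ℤ))).1 = q.1 + t := by rw [fst_add_smul]; ring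
    have e2 : (q + t • ((1:ℤ),(0:ℤ))).2 = q.2 := by rw [snd_add_smul]; ring
    rw [Rem, e1, e2]
    push_cast
    rw [Equiv.apply_eq_iff_eq_symm_apply]
    constructor <;> intro h <;> linear_combination h
  · refine ⟨σ (q.1 : ZMod (k+1)) - (q.2 : ZMod (k+1)), fun t => ?_⟩
    have e1 : (q + t • ((0:ℤ),(1:ℤ))).1 = q.1 := by rw [fst_add_smul]; ring
    have e2 : (q + t • ((0:ℤ),(1:ℤ))).2 = q.2 + t := by rw [snd_add_smul]; ring
    rw [Rem, e1, e2]
    push_cast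
    constructor <;> intro h <;> linear_combination -h
  · refine ⟨(Equiv.ofBijective _ hσ2).symm ((q.1 : ZMod (k+1)) - (q.2 : ZMod (k+1)))
      - (q.1 : ZMod (k+1)), fun t => ?_⟩
    have e1 : (q + t • ((1:ℤ),(1:ℤ))).1 = q.1 + t := by rw [fst_add_smul]; ring
    have e2 : (q + t • ((1:ℤ),(1:ℤ))).2 = q.2 + t := by rw [snd_add_smul]; ring
    rw [Rem, e1, e2]
    push_cast
    constructor
    · intro h
      have h2 : Equiv.ofBijective _ hσ2 ((q.1 : ZMod (k+1)) + t)
          = (q.1 : ZMod (k+1)) - (q.2 : ZMod (k+1)) := by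
        show ((q.1 : ZMod (k+1)) + t) - σ ((q.1 : ZMod (k+1)) + t)
            = (q.1 : ZMod (k+1)) - (q.2 : ZMod (k+1))
        rw [h]; ring
      rw [Equiv.apply_eq_iff_eq_symm_apply] at h2
      linear_combination h2
    · intro h
      have h2 : (q.1 : ZMod (k+1)) + t = (Equiv.ofBijective _ hσ2).symm
          ((q.1 : ZMod (k+1)) - (q.2 : ZMod (k+1))) := by linear_combination h
      have h3 := congrArg (Equiv.ofBijective _ hσ2) h2
      rw [Equiv.apply_symm_apply] at h3
      have h4 : ((q.1 : ZMod (k+1)) + t) - σ ((q.1 : ZMod (k+1)) + t)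
          = (q.1 : ZMod (k+1)) - (q.2 : ZMod (k+1)) := h3
      linear_combination -h4
  · refine ⟨(Equiv.ofBijective _ hσ1).symm ((q.1 : ZMod (k+1)) + (q.2 : ZMod (k+1)))
      - (q.1 : ZMod (k+1)), fun t => ?_⟩
    have e1 : (q + t • ((1:ℤ),(-1:ℤ))).1 = q.1 + t := by rw [fst_add_smul]; ring
    have e2 : (q + t • ((1:ℤ),(-1:ℤ))).2 = q.2 - t := by rw [snd_add_smul]; ring
    rw [Rem, e1, e2]
    push_cast
    constructor
    · intro h
      have h2 : Equiv.ofBijective _ hσ1 ((q.1 : ZMod (k+1)) + t)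
          = (q.1 : ZMod (k+1)) + (q.2 : ZMod (k+1)) := by
        show ((q.1 : ZMod (k+1)) + t) + σ ((q.1 : ZMod (k+1)) + t)
            = (q.1 : ZMod (k+1)) + (q.2 : ZMod (k+1))
        rw [h]; ring
      rw [Equiv.apply_eq_iff_eq_symm_apply] at h2
      linear_combination h2
    · intro h
      have h2 : (q.1 : ZMod (k+1)) + t = (Equiv.ofBijective _ hσ1).symm
          ((q.1 : ZMod (k+1)) + (q.2 : ZMod (k+1))) := by linear_combination h
      have h3 := congrArg (Equiv.ofBijective _ hσ1) h2
      rw [Equiv.apply_symm_apply] at h3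
      have h4 : ((q.1 : ZMod (k+1)) + t) + σ ((q.1 : ZMod (k+1)) + t)
          = (q.1 : ZMod (k+1)) + (q.2 : ZMod (k+1)) := h3
      linear_combination h4

lemma mem_Sq {m : ℕ} {p : ℤ × ℤ} :
    p ∈ Sq k m ↔ 0 ≤ p.1 ∧ p.1 < (((k+1)*m : ℕ) : ℤ) ∧ 0 ≤ p.2 ∧ p.2 < (((k+1)*m : ℕ) : ℤ) := by
  rw [Sq, Finset.mem_product, Finset.mem_Ico, Finset.mem_Ico]
  tauto

lemma mem_Block {m : ℕ} {p : ℤ × ℤ} :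
    p ∈ Block σ m ↔ p ∈ Sq k m ∧ ¬ Rem σ p := Finset.mem_filter

lemma block_nonneg_snd {m : ℕ} : ∀ p ∈ Block σ m, 0 ≤ p.2 := by
  intro p hp
  exact (mem_Sq.mp (mem_Block.mp hp).1).2.2.1

lemma natCast_int_zmod (a : ℕ) : (((a : ℤ)) : ZMod (k+1)) = (a : ZMod (k+1)) := by
  push_cast; ring

lemma rlen_le (hσ1 : Function.Bijective (fun i : ZMod (k+1) => i + σ i))
    (hσ2 : Function.Bijective (fun i : ZMod (k+1) => i - σ i))
    {m : ℕ} {d : ℤ × ℤ} (hd : d ∈ Dirs) {q : ℤ × ℤ} (hq : q ∈ Block σ m) :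
    rlen (Block σ m) hd q ≤ k := by
  by_contra hcon
  push_neg at hcon
  obtain ⟨c, hc⟩ := rem_class hσ1 hσ2 hd (rstart (Block σ m) hd q)
  have hstart := isPatternStart_rstart (Block σ m) hd hq
  have hval : c.val < k + 1 := ZMod.val_lt c
  have hmem := hstart.1 c.val (by omega)
  have hrem : Rem σ (rstart (Block σ m) hd q + ((c.val : ℕ) : ℤ) • d) := by
    rw [hc]
    rw [natCast_int_zmod]
    exact ZMod.natCast_rightInverse c
  exact (mem_Block.mp hmem).2 hrem

lemma in_sq_of_near {m : ℕ} {q : ℤ × ℤ} (hq : q ∈ Sq k m)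
    (h1 : (k:ℤ) ≤ q.1) (h2 : q.1 + k < (((k+1)*m : ℕ) : ℤ))
    (h3 : (k:ℤ) ≤ q.2) (h4 : q.2 + k < (((k+1)*m : ℕ) : ℤ))
    {d : ℤ × ℤ} (hd : d ∈ Dirs) {t : ℤ} (ht : -(k:ℤ) ≤ t ∧ t ≤ k) :
    q + t • d ∈ Sq k m := by
  rw [mem_Sq] at hq ⊢
  rw [fst_add_smul, snd_add_smul]
  push_cast at hq h2 h4 ⊢
  rcases dirs_cases hd with h | h | h | h <;> subst h <;> norm_num <;> omega

lemma rem_of_not_block {m : ℕ} {p : ℤ × ℤ} (hsq : p ∈ Sq k m) (hnb : p ∉ Block σ m) :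
    Rem σ p := by
  by_contra h
  exact hnb (mem_Block.mpr ⟨hsq, h⟩)

lemma rlen_interior (hk : 2 ≤ k)
    (hσ1 : Function.Bijective (fun i : ZMod (k+1) => i + σ i))
    (hσ2 : Function.Bijective (fun i : ZMod (k+1) => i - σ i))
    {m : ℕ} {d : ℤ × ℤ} (hd : d ∈ Dirs) {q : ℤ × ℤ} (hq : q ∈ Block σ m)
    (h1 : (k:ℤ) ≤ q.1) (h2 : q.1 + k < (((k+1)*m : ℕ) : ℤ))
    (h3 : (k:ℤ) ≤ q.2) (h4 : q.2 + k < (((k+1)*m : ℕ) : ℤ)) :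
    rlen (Block σ m) hd q = k := by
  set S := Block σ m with hS
  have hL : rlen S hd q ≤ k := rlen_le hσ1 hσ2 hd hq
  have hsq : q ∈ Sq k m := (mem_Block.mp hq).1
  set b := back S hd q with hb
  set f := forw S hd q with hf
  have hLdef : rlen S hd q = b + f + 1 := rfl
  -- backward endpoint
  have hpt1 : q + (-(b:ℤ)-1) • d ∉ S := by
    have := back_notmem S hd q
    have he : q + (-(b:ℤ)-1) • d = q - ((b:ℤ)+1) • d := by
      rw [show (-(b:ℤ)-1) = -((b:ℤ)+1) by ring, neg_smul, ← sub_eq_add_neg]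
    rwa [he]
  have hpt1sq : q + (-(b:ℤ)-1) • d ∈ Sq k m :=
    in_sq_of_near hsq h1 h2 h3 h4 hd (by omega)
  have hrem1 : Rem σ (q + (-(b:ℤ)-1) • d) := rem_of_not_block hpt1sq hpt1
  -- forward endpoint
  have hpt2 : q + ((f:ℤ)+1) • d ∉ S := forw_notmem S hd q
  have hpt2sq : q + ((f:ℤ)+1) • d ∈ Sq k m :=
    in_sq_of_near hsq h1 h2 h3 h4 hd (by omega)
  have hrem2 : Rem σ (q + ((f:ℤ)+1) • d) := rem_of_not_block hpt2sq hpt2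
  obtain ⟨c, hc⟩ := rem_class hσ1 hσ2 hd q
  have hc1 : ((-(b:ℤ)-1 : ℤ) : ZMod (k+1)) = c := (hc _).mp hrem1
  have hc2 : (((f:ℤ)+1 : ℤ) : ZMod (k+1)) = c := (hc _).mp hrem2
  have hzero : (((b:ℤ) + f + 2 : ℤ) : ZMod (k+1)) = 0 := by
    push_cast at hc1 hc2 ⊢
    linear_combination hc2 - hc1
  have hdvd : ((k+1 : ℕ) : ℤ) ∣ ((b:ℤ) + f + 2) := by
    rwa [ZMod.intCast_zmod_eq_zero_iff_dvd] at hzero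
  have hle : ((k+1 : ℕ) : ℤ) ≤ (b:ℤ) + f + 2 := Int.le_of_dvd (by positivity) hdvd
  omega

lemma strip_card (a b : ℤ) (hab : a ≤ b) :
    ((Finset.Ico a b) ×ˢ (Finset.Ico (0:ℤ) (((k+1)*m : ℕ) : ℤ))).card
      = (b - a).toNat * ((k+1)*m) := by
  rw [Finset.card_product, Int.card_Ico, Int.card_Ico, sub_zero, Int.toNat_natCast]

lemma bad_card (hk : 2 ≤ k)
    (hσ1 : Function.Bijective (fun i : ZMod (k+1) => i + σ i))
    (hσ2 : Function.Bijective (fun i : ZMod (k+1) => i - σ i))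
    {m : ℕ} {d : ℤ × ℤ} (hd : d ∈ Dirs) :
    ((Block σ m).filter (fun q => rlen (Block σ m) hd q ≠ k)).card
      ≤ 4 * (k * ((k+1)*m)) := by
  set N : ℤ := (((k+1)*m : ℕ) : ℤ) with hN
  have hsub : (Block σ m).filter (fun q => rlen (Block σ m) hd q ≠ k)
      ⊆ ((Finset.Ico (0:ℤ) (k:ℤ)) ×ˢ (Finset.Ico (0:ℤ) N)
        ∪ (Finset.Ico (N - k) N) ×ˢ (Finset.Ico (0:ℤ) N)
        ∪ (Finset.Ico (0:ℤ) N) ×ˢ (Finset.Ico (0:ℤ) (k:ℤ))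
        ∪ (Finset.Ico (0:ℤ) N) ×ˢ (Finset.Ico (N - k) N)) := by
    intro q hq
    obtain ⟨hqb, hne⟩ := Finset.mem_filter.mp hq
    have hsq := mem_Sq.mp (mem_Block.mp hqb).1
    have hni : ¬ ((k:ℤ) ≤ q.1 ∧ q.1 + k < N ∧ (k:ℤ) ≤ q.2 ∧ q.2 + k < N) := by
      rintro ⟨a1, a2, a3, a4⟩
      exact hne (rlen_interior hk hσ1 hσ2 hd hqb a1 a2 a3 a4)
    simp only [Finset.mem_union, Finset.mem_product, Finset.mem_Ico]
    omega
  calc ((Block σ m).filter (fun q => rlen (Block σ m) hd q ≠ k)).card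
      ≤ _ := Finset.card_le_card hsub
    _ ≤ 4 * (k * ((k+1)*m)) := by
        refine le_trans (Finset.card_union_le _ _) ?_
        have t1 := Finset.card_union_le (((Finset.Ico (0:ℤ) (k:ℤ)) ×ˢ (Finset.Ico (0:ℤ) N))
          ∪ (Finset.Ico (N - k) N) ×ˢ (Finset.Ico (0:ℤ) N))
          ((Finset.Ico (0:ℤ) N) ×ˢ (Finset.Ico (0:ℤ) (k:ℤ)))
        have t2 := Finset.card_union_le ((Finset.Ico (0:ℤ) (k:ℤ)) ×ˢ (Finset.Ico (0:ℤ) N))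
          ((Finset.Ico (N - k) N) ×ˢ (Finset.Ico (0:ℤ) N))
        have c1 : ((Finset.Ico (0:ℤ) (k:ℤ)) ×ˢ (Finset.Ico (0:ℤ) N)).card = k * ((k+1)*m) := by
          rw [Finset.card_product, Int.card_Ico, Int.card_Ico, sub_zero, sub_zero,
            Int.toNat_natCast, Int.toNat_natCast]
        have c2 : ((Finset.Ico (N - k) N) ×ˢ (Finset.Ico (0:ℤ) N)).card = k * ((k+1)*m) := by
          rw [Finset.card_product, Int.card_Ico, Int.card_Ico, sub_zero,
            Int.toNat_natCast, show N - (N - k) = (k:ℤ) by ring, Int.toNat_natCast]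
        have c3 : ((Finset.Ico (0:ℤ) N) ×ˢ (Finset.Ico (0:ℤ) (k:ℤ))).card = ((k+1)*m) * k := by
          rw [Finset.card_product, Int.card_Ico, Int.card_Ico, sub_zero, sub_zero,
            Int.toNat_natCast, Int.toNat_natCast]
        have c4 : ((Finset.Ico (0:ℤ) N) ×ˢ (Finset.Ico (N - k) N)).card = ((k+1)*m) * k := by
          rw [Finset.card_product, Int.card_Ico, Int.card_Ico, sub_zero,
            Int.toNat_natCast, show N - (N - k) = (k:ℤ) by ring, Int.toNat_natCast]
        have e1 : ((k+1)*m) * k = k * ((k+1)*m) := Nat.mul_comm _ _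
        omega

lemma block_dir_lower (hk : 2 ≤ k)
    (hσ1 : Function.Bijective (fun i : ZMod (k+1) => i + σ i))
    (hσ2 : Function.Bijective (fun i : ZMod (k+1) => i - σ i))
    {m : ℕ} {d : ℤ × ℤ} (hd : d ∈ Dirs) :
    (Block σ m).card ≤ (startsF (Block σ m) k d).card * k + 4 * (k * ((k+1)*m)) := by
  have hsum := Finset.card_filter_add_card_filter_not
    (s := Block σ m) (p := fun q => rlen (Block σ m) hd q = k)
  have heq := card_starts_mul (Block σ m) (by omega : 1 ≤ k) hd
  have hbad : ((Block σ m).filter (fun q => ¬ (rlen (Block σ m) hd q = k))).card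
      ≤ 4 * (k * ((k+1)*m)) := bad_card hk hσ1 hσ2 (m := m) hd
  omega

lemma block_count_upper (hk : 2 ≤ k) {m : ℕ} :
    patternCount (Block σ m) k * k ≤ 4 * (k*(k+1)*m^2) := by
  have := patternCount_mul_le (Block σ m) (by omega : 1 ≤ k)
  rwa [card_Block] at this

lemma block_count_lower (hk : 2 ≤ k)
    (hσ1 : Function.Bijective (fun i : ZMod (k+1) => i + σ i))
    (hσ2 : Function.Bijective (fun i : ZMod (k+1) => i - σ i)) (m : ℕ) :
    4 * (k*(k+1)*m^2) ≤ patternCount (Block σ m) k * k + 16 * (k * ((k+1)*m)) := by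
  have hpc : patternCount (Block σ m) k * k
      = ∑ d ∈ Dirs, (startsF (Block σ m) k d).card * k := by
    rw [patternCount_eq _ (by omega : 1 ≤ k), Finset.sum_mul]
  have hsum : ∑ d ∈ Dirs, (Block σ m).card
      ≤ ∑ d ∈ Dirs, ((startsF (Block σ m) k d).card * k + 4 * (k * ((k+1)*m))) :=
    Finset.sum_le_sum (fun d hd => block_dir_lower hk hσ1 hσ2 hd)
  rw [Finset.sum_const, dirs_card, Finset.sum_add_distrib, Finset.sum_const, dirs_card,
    ← hpc] at hsum
  have hcb := card_Block (k := k) σ m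
  simp only [smul_eq_mul] at hsum
  omega


end Block2

section Assembly
variable {k : ℕ} {σ : Equiv.Perm (ZMod (k+1))}

lemma cfg_exists (hk : 2 ≤ k)
    (hσ1 : Function.Bijective (fun i : ZMod (k+1) => i + σ i))
    (hσ2 : Function.Bijective (fun i : ZMod (k+1) => i - σ i))
    (m r : ℕ) :
    ∃ S : Finset (ℤ × ℤ),
      patternCount S k = patternCount (Block σ m) k + r ∧
      S.card = k*(k+1)*m^2 + r * k := by
  obtain ⟨hpcS, hcardS, hyS⟩ := patternCount_Segs k hk r
  refine ⟨Block σ m ∪ Segs k r, ?_, ?_⟩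
  · rw [sep_patternCount (by omega : 1 ≤ k) (a := 0) (b := -((k:ℤ)+2))
      (block_nonneg_snd) (fun p hp => (hyS p hp).2) (by push_cast; omega), hpcS]
  · rw [Finset.card_union_of_disjoint
      (sep_disjoint (a := 0) (b := -((k:ℤ)+2)) (block_nonneg_snd)
        (fun p hp => (hyS p hp).2) (by omega)),
      card_Block, hcardS]

lemma minPoints_nonempty (hk : 2 ≤ k)
    (hσ1 : Function.Bijective (fun i : ZMod (k+1) => i + σ i))
    (hσ2 : Function.Bijective (fun i : ZMod (k+1) => i - σ i)) (n : ℕ) :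
    {c | ∃ S : Finset (ℤ × ℤ), patternCount S k = n ∧ S.card = c}.Nonempty := by
  obtain ⟨S, h1, h2⟩ := cfg_exists hk hσ1 hσ2 0 n
  refine ⟨S.card, S, ?_, rfl⟩
  rw [h1]
  have : patternCount (Block σ 0) k = 0 := by
    have h := block_count_upper (σ := σ) hk (m := 0)
    simp at h
    rcases h with h | h
    · exact h
    · omega
  omega

lemma minPoints_lower (hk : 2 ≤ k)
    (hσ1 : Function.Bijective (fun i : ZMod (k+1) => i + σ i))
    (hσ2 : Function.Bijective (fun i : ZMod (k+1) => i - σ i)) (n : ℕ) :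
    n * k ≤ 4 * minPoints k n := by
  have hmem := Nat.sInf_mem (minPoints_nonempty hk hσ1 hσ2 n)
  obtain ⟨S, h1, h2⟩ := hmem
  have := patternCount_mul_le S (by omega : 1 ≤ k)
  rw [h1] at this
  unfold minPoints
  omega

lemma minPoints_upper (hk : 2 ≤ k)
    (hσ1 : Function.Bijective (fun i : ZMod (k+1) => i + σ i))
    (hσ2 : Function.Bijective (fun i : ZMod (k+1) => i - σ i)) (n : ℕ) :
    4 * minPoints k n ≤ k * n + 96*(k*((k+1)*(Nat.sqrt n + 1))) := by
  set m : ℕ := Nat.sqrt (n / (4*(k+1))) with hm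
  set g : ℕ := patternCount (Block σ m) k with hg
  -- g ≤ 4 (k+1) m²  and 4(k+1)m² ≤ n
  have hup : g * k ≤ (4*((k+1)*m^2)) * k := by
    have := block_count_upper (σ := σ) hk (m := m)
    calc g * k ≤ 4 * (k*(k+1)*m^2) := this
      _ = (4*((k+1)*m^2)) * k := by ring
  have hup' : g ≤ 4*((k+1)*m^2) := Nat.le_of_mul_le_mul_right hup (by omega)
  have hm2 : m^2 ≤ n / (4*(k+1)) := by rw [hm]; exact Nat.sqrt_le' _
  have hA1 : 4*((k+1)*m^2) ≤ n := by
    calc 4*((k+1)*m^2) ≤ 4*((k+1)*(n / (4*(k+1)))) := by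
          exact Nat.mul_le_mul_left _ (Nat.mul_le_mul_left _ hm2)
      _ = (4*(k+1))*(n / (4*(k+1))) := by ring
      _ ≤ n := Nat.mul_div_le n _
  have hgn : g ≤ n := le_trans hup' hA1
  -- n < 4 (k+1)(m+1)²
  have hq1 : n / (4*(k+1)) < (m+1)^2 := by
    rw [hm]
    simpa using Nat.lt_succ_sqrt' (n / (4*(k+1)))
  have hq2 : n < 4*(k+1)*(n/(4*(k+1))) + 4*(k+1) := by
    have h1 := Nat.div_add_mod n (4*(k+1))
    have h2 := Nat.mod_lt n (show 0 < 4*(k+1) by omega)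
    omega
  have hA3 : n < 4*((k+1)*(m+1)^2) := by
    have h3 : n/(4*(k+1)) + 1 ≤ (m+1)^2 := hq1
    calc n < 4*(k+1)*(n/(4*(k+1))) + 4*(k+1) := hq2
      _ = 4*(k+1)*(n/(4*(k+1)) + 1) := by ring
      _ ≤ 4*(k+1)*((m+1)^2) := Nat.mul_le_mul_left _ h3
      _ = 4*((k+1)*(m+1)^2) := by ring
  -- lower bound on g
  have hlowmul : (4*((k+1)*m^2)) * k ≤ (g + 16*((k+1)*m)) * k := by
    have h := block_count_lower hk hσ1 hσ2 m
    calc (4*((k+1)*m^2))*k = 4*(k*(k+1)*m^2) := by ring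
      _ ≤ g * k + 16*(k*((k+1)*m)) := h
      _ = (g + 16*((k+1)*m)) * k := by ring
  have hA4 : 4*((k+1)*m^2) ≤ g + 16*((k+1)*m) := Nat.le_of_mul_le_mul_right hlowmul (by omega)
  -- r bound
  have hrb : n ≤ g + 24*((k+1)*(m+1)) := by nlinarith [hA3, hA4]
  -- existence
  obtain ⟨S, h1, h2⟩ := cfg_exists hk hσ1 hσ2 m (n - g)
  have hpc : patternCount S k = n := by rw [h1, ← hg]; omega
  have hmp : minPoints k n ≤ k*(k+1)*m^2 + (n - g) * k :=
    Nat.sInf_le ⟨S, hpc, h2⟩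
  -- combine
  have hmsq : m ≤ Nat.sqrt n := by
    rw [hm]
    exact Nat.sqrt_le_sqrt (Nat.div_le_self _ _)
  have hfin : 4 * (k*(k+1)*m^2 + (n - g) * k) ≤ k * n + 96*(k*((k+1)*(Nat.sqrt n + 1))) := by
    have hb1 : 4 * (k*(k+1)*m^2) ≤ k * n := by
      calc 4 * (k*(k+1)*m^2) = k * (4*((k+1)*m^2)) := by ring
        _ ≤ k * n := Nat.mul_le_mul_left _ hA1
    have hb2 : (n - g) ≤ 24*((k+1)*(m+1)) := by omega
    have hb3 : 4 * ((n - g) * k) ≤ 96*(k*((k+1)*(Nat.sqrt n + 1))) := by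
      calc 4 * ((n - g) * k) ≤ 4 * ((24*((k+1)*(m+1))) * k) := by
            exact Nat.mul_le_mul_left _ (Nat.mul_le_mul_right _ hb2)
        _ = 96*(k*((k+1)*(m+1))) := by ring
        _ ≤ 96*(k*((k+1)*(Nat.sqrt n + 1))) := by
            apply Nat.mul_le_mul_left
            apply Nat.mul_le_mul_left
            apply Nat.mul_le_mul_left
            omega
    omega
  omega

end Assembly

open Filter

lemma sqrt_term_tendsto :
    Tendsto (fun n : ℕ => ((Nat.sqrt n : ℝ) + 1) / n) atTop (nhds 0) := by
  apply squeeze_zero' (g := fun n : ℕ => 2 * (n:ℝ) ^ (-(1/2) : ℝ))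
  · filter_upwards [eventually_ge_atTop 1] with n hn
    positivity
  · filter_upwards [eventually_ge_atTop 1] with n hn
    have hn0 : (0:ℝ) < n := by exact_mod_cast hn
    have h1 : ((Nat.sqrt n : ℝ)) ≤ Real.sqrt n := Real.nat_sqrt_le_real_sqrt
    have h2 : (1:ℝ) ≤ Real.sqrt n := by
      rw [show (1:ℝ) = Real.sqrt 1 by simp]
      exact Real.sqrt_le_sqrt (by exact_mod_cast hn)
    have hrw : (n:ℝ) ^ (-(1/2) : ℝ) = (Real.sqrt n)⁻¹ := by
      rw [Real.rpow_neg (by positivity), ← Real.sqrt_eq_rpow]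
    calc ((Nat.sqrt n : ℝ) + 1) / n ≤ (2 * Real.sqrt n) / n := by
          rw [div_le_div_iff_of_pos_right hn0]
          linarith
      _ = 2 * (Real.sqrt n / n) := by ring
      _ = 2 * (1 / Real.sqrt n) := by rw [Real.sqrt_div_self']
      _ = 2 * (n:ℝ) ^ (-(1/2) : ℝ) := by rw [hrw, one_div]
  · have hb : Tendsto (fun x : ℝ => x ^ (-(1/2) : ℝ)) atTop (nhds 0) :=
      tendsto_rpow_neg_atTop (by norm_num)
    have := (hb.comp tendsto_natCast_atTop_atTop).const_mul (2:ℝ)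
    simpa using this

theorem stmt8 (k : ℕ) (hk : 2 ≤ k)
    (hσ : ∃ σ : Equiv.Perm (ZMod (k + 1)),
      Function.Bijective (fun i => i + σ i) ∧ Function.Bijective (fun i => i - σ i)) :
    Tendsto (fun n : ℕ => (minPoints k n : ℝ) / n) atTop (nhds ((k : ℝ) / 4)) := by
  obtain ⟨σ, hσ1, hσ2⟩ := hσ
  have he := sqrt_term_tendsto
  set C : ℝ := 24 * k * (k+1) with hC
  apply tendsto_of_tendsto_of_tendsto_of_le_of_le' (g := fun _ : ℕ => (k:ℝ)/4)
    (h := fun n : ℕ => (k:ℝ)/4 + C * (((Nat.sqrt n : ℝ) + 1) / n))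
  · exact tendsto_const_nhds
  · have := tendsto_const_nhds (x := (k:ℝ)/4) (f := atTop (α := ℕ)) |>.add (he.const_mul C)
    simpa using this
  · filter_upwards [eventually_ge_atTop 1] with n hn
    have hn0 : (0:ℝ) < n := by exact_mod_cast hn
    have h := minPoints_lower hk hσ1 hσ2 n
    have hcast : (n:ℝ) * k ≤ 4 * (minPoints k n : ℝ) := by exact_mod_cast h
    rw [div_le_div_iff₀ (by norm_num) hn0]
    linarith
  · filter_upwards [eventually_ge_atTop 1] with n hn
    have hn0 : (0:ℝ) < n := by exact_mod_cast hn
    have h := minPoints_upper hk hσ1 hσ2 n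
    have hcast : 4 * (minPoints k n : ℝ)
        ≤ k * n + 96 * (k * ((k+1) * ((Nat.sqrt n : ℝ) + 1))) := by exact_mod_cast h
    rw [div_le_iff₀ hn0]
    have hexp : ((k:ℝ)/4 + C * (((Nat.sqrt n : ℝ) + 1) / n)) * n
        = (k:ℝ) * n / 4 + C * ((Nat.sqrt n : ℝ) + 1) := by
      field_simp
    rw [hexp, hC]
    linarith
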